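/- Let R be a commutative ring and S a multiplicative subset. Then the set consisting of all prime ideals of R together with all proper ideals meeting S is an S-Noetherian point annihilator set for R: every nonzero S-Noetherian R-module M has a nonzero element x whose annihilator is either a prime ideal or a proper ideal meeting S. -/

import Mathlib

theorem comm_S_noetherian_point_annihilator {R : Type*} [CommRing R] (S : Set R)
    (hS1 : (1 : R) ∈ S) (hSmul : ∀ a ∈ S, ∀ b ∈ S, a * b ∈ S)
    {M : Type*} [AddCommGroup M] [Module R M]
    (hM : ∃ x : M, x ≠ 0)
    (hSN : ∀ N : Submodule R M, ∃ s ∈ S, ∃ F : Submodule R M,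
      F.FG ∧ F ≤ N ∧ ∀ n ∈ N, s • n ∈ F) :
    ∃ x : M, x ≠ 0 ∧
      (Ideal.IsPrime (LinearMap.ker (LinearMap.toSpanSingleton R M x)) ∨
        (LinearMap.ker (LinearMap.toSpanSingleton R M x) ≠ ⊤ ∧
          ∃ s ∈ S, s ∈ LinearMap.ker (LinearMap.toSpanSingleton R M x))) := by
  classical
  by_cases htor : ∃ x : M, x ≠ 0 ∧ ∃ s ∈ S, s • x = 0
  · obtain ⟨x, hx, s, hsS, hsx⟩ := htor
    refine ⟨x, hx, Or.inr ⟨?_, s, hsS, ?_⟩⟩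
    · intro h
      apply hx
      have h1 : (1 : R) ∈ LinearMap.ker (LinearMap.toSpanSingleton R M x) := h ▸ trivial
      simpa using h1
    · simpa [LinearMap.mem_ker] using hsx
  · push_neg at htor
    have hnt : ∀ s ∈ S, ∀ x : M, s • x = 0 → x = 0 := by
      intro s hs x hx
      by_contra h0
      exact htor x h0 s hs hx
    -- set up the localization
    set S' : Submonoid R := { carrier := S, mul_mem' := fun {a b} ha hb => hSmul a ha b hb, one_mem' := hS1 } with hS'
    set Rₛ := Localization S'
    set Mₛ := LocalizedModule S' M
    set mkM : M →ₗ[R] Mₛ := LocalizedModule.mkLinearMap S' M with hmkM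
    have hmk0 : ∀ (z : M) (u : S'), LocalizedModule.mk z u = 0 ↔ z = 0 := by
      intro z u
      constructor
      · intro h
        rw [← LocalizedModule.zero_mk u, LocalizedModule.mk_eq] at h
        obtain ⟨c, hc⟩ := h
        simp only [smul_zero, Submonoid.smul_def, smul_smul] at hc
        exact hnt _ (hSmul _ c.2 _ u.2) z hc
      · rintro rfl; exact LocalizedModule.zero_mk u
    -- the localized module is Noetherian
    have hNoeth : IsNoetherian Rₛ Mₛ := by
      rw [isNoetherian_def]
      intro N'
      set N : Submodule R M := (N'.restrictScalars R).comap mkM with hN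
      obtain ⟨s, hsS, F, ⟨T, hT⟩, hFN, hmul⟩ := hSN N
      refine ⟨T.image mkM, ?_⟩
      rw [Finset.coe_image]
      apply le_antisymm
      · apply Submodule.span_le.mpr
        rintro _ ⟨x, hxT, rfl⟩
        have hxF : x ∈ F := hT ▸ Submodule.subset_span hxT
        exact hFN hxF
      · intro z hz
        revert hz
        induction z using LocalizedModule.induction_on with
        | h m t =>
          intro hz
          have hm1 : LocalizedModule.mk m 1 ∈ N' := by
            have h2 := N'.smul_mem (Localization.mk (t : R) 1) hz
            rwa [LocalizedModule.mk_smul_mk, one_mul, ← Submonoid.smul_def,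
              LocalizedModule.mk_cancel] at h2
          have hmN : m ∈ N := by
            show mkM m ∈ N'.restrictScalars R
            rw [hmkM, LocalizedModule.mkLinearMap_apply]
            exact hm1
          have h1 : LocalizedModule.mk (s • m) 1 ∈ Submodule.span Rₛ (mkM '' ↑T) := by
            have hmem : mkM (s • m) ∈ Submodule.map mkM F :=
              Submodule.mem_map_of_mem (hmul m hmN)
            rw [← hT, Submodule.map_span] at hmem
            have hle : Submodule.span R (mkM '' ↑T) ≤
                (Submodule.span Rₛ (mkM '' ↑T)).restrictScalars R :=
              Submodule.span_le.mpr Submodule.subset_span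
            exact hle hmem
          have h2 := Submodule.smul_mem _ (Localization.mk (1 : R) t)
            (Submodule.smul_mem _ (Localization.mk (1 : R) (⟨s, hsS⟩ : S')) h1)
          rw [LocalizedModule.mk_smul_mk, LocalizedModule.mk_smul_mk, one_smul, one_smul,
            mul_one] at h2
          have he : LocalizedModule.mk (s • m) (t * ⟨s, hsS⟩) = LocalizedModule.mk m t := by
            rw [LocalizedModule.mk_eq]
            exact ⟨1, by simp [Submonoid.smul_def, smul_smul, mul_comm, mul_left_comm]⟩
          rwa [he] at h2
    -- the nonzero element of the localized module
    obtain ⟨x0, hx0⟩ := hM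
    set xₛ : Mₛ := LocalizedModule.mk x0 1 with hxₛ
    have hxs0 : xₛ ≠ 0 := fun h => hx0 ((hmk0 x0 1).mp h)
    set I : Ideal Rₛ := (Submodule.span Rₛ {xₛ}).annihilator with hI
    have hIf : I = LinearMap.ker (LinearMap.toSpanSingleton Rₛ Mₛ xₛ) := by
      ext a
      rw [hI, Submodule.mem_annihilator_span_singleton, LinearMap.mem_ker,
        LinearMap.toSpanSingleton_apply]
    have hInoeth : IsNoetherian Rₛ (Rₛ ⧸ I) := by
      haveI := hNoeth
      exact isNoetherian_of_injective (I.liftQ (LinearMap.toSpanSingleton Rₛ Mₛ xₛ) hIf.le)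
        (by rw [← LinearMap.ker_eq_bot]; exact Submodule.ker_liftQ_eq_bot' I _ hIf)
    haveI hQnoeth : IsNoetherianRing (Rₛ ⧸ I) :=
      isNoetherianRing_iff.mpr (isNoetherian_of_tower Rₛ hInoeth)
    haveI hQnt : Nontrivial (Rₛ ⧸ I) := by
      apply Ideal.Quotient.nontrivial_iff.mpr
      intro h
      apply hxs0
      have h1 : (1 : Rₛ) ∈ I := h ▸ trivial
      rw [hI, Submodule.mem_annihilator_span_singleton, one_smul] at h1
      exact h1
    obtain ⟨q', hq'⟩ := associatedPrimes.nonempty (Rₛ ⧸ I) (Rₛ ⧸ I)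
    obtain ⟨hq'prime, ybar, hybar⟩ := isAssociatedPrime_iff.mp hq'
    obtain ⟨b, rfl⟩ := Ideal.Quotient.mk_surjective ybar
    have hb : b ∉ I := by
      intro hbI
      apply hq'prime.ne_top
      rw [hybar, (Ideal.Quotient.eq_zero_iff_mem).mpr hbI]
      ext r; simp [Submodule.mem_colon_singleton]
    have hy0 : b • xₛ ≠ 0 := by
      intro h
      exact hb (by rw [hI, Submodule.mem_annihilator_span_singleton]; exact h)
    obtain ⟨m, u, hy⟩ : ∃ m u, b • xₛ = LocalizedModule.mk m u :=
      LocalizedModule.induction_on (fun m u => ⟨m, u, rfl⟩) (b • xₛ)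
    have hm0 : m ≠ 0 := by
      rintro rfl
      exact hy0 (by rw [hy]; exact LocalizedModule.zero_mk u)
    refine ⟨m, hm0, Or.inl ?_⟩
    set p : Ideal R := q'.comap ((Ideal.Quotient.mk I).comp (algebraMap R Rₛ)) with hp
    haveI hpprime : p.IsPrime := Ideal.IsPrime.comap _
    have hker : LinearMap.ker (LinearMap.toSpanSingleton R M m) = p := by
      ext a
      have h1 : algebraMap R Rₛ a • (b • xₛ) = LocalizedModule.mk (a • m) u := by
        rw [hy, ← Localization.mk_one_eq_algebraMap, LocalizedModule.mk_smul_mk, one_mul]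
      rw [LinearMap.mem_ker, LinearMap.toSpanSingleton_apply, hp, Ideal.mem_comap,
        RingHom.comp_apply, hybar, Submodule.mem_colon_singleton, Submodule.mem_bot, smul_eq_mul,
        ← map_mul, Ideal.Quotient.eq_zero_iff_mem, hI,
        Submodule.mem_annihilator_span_singleton, mul_smul, h1, hmk0]
    rw [hker]
    exact hpprime
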